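/- Let (Ω, 𝓕) be a measurable space and let c : 𝓕 → [0,1] be a monotone, normalized, submodular set function. For every p ∈ ℕ and all measurable X, Y : Ω → ℝ taking values in {0, 1, …, 2^p}, one has ∫(X + Y) dc ≤ ∫X dc + ∫Y dc. -/

import Mathlib

open MeasureTheory Set

/-- The Choquet integral of `X` with respect to the set function `c`:
`∫ X dc = ∫_{-∞}^0 (c(X > x) - 1) dx + ∫_0^∞ c(X > x) dx`. -/
noncomputable def choquet {Ω : Type*} [MeasurableSpace Ω] (c : Set Ω → ℝ) (X : Ω → ℝ) : ℝ :=
  (∫ x in Set.Iio (0 : ℝ), (c {ω | x < X ω} - 1)) + ∫ x in Set.Ioi (0 : ℝ), c {ω | x < X ω}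

section Aux

variable {Ω : Type*} [MeasurableSpace Ω]

/-- The Choquet integral of a `{0,…,M}`-valued function is a finite sum of capacities. -/
lemma choquet_eq_sum_aux (c : Set Ω → ℝ) (hc_empty : c ∅ = 0) (hc_univ : c Set.univ = 1)
    (X : Ω → ℝ) (f : Ω → ℕ) (M : ℕ) (hfX : ∀ ω, X ω = (f ω : ℝ)) (hfM : ∀ ω, f ω ≤ M) :
    choquet c X = ∑ k ∈ Finset.range M, c {ω | (k : ℝ) < X ω} := by
  have hXnonneg : ∀ ω, (0:ℝ) ≤ X ω := fun ω => by rw [hfX ω]; positivity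
  have hneg : (∫ x in Set.Iio (0 : ℝ), (c {ω | x < X ω} - 1)) = 0 := by
    rw [setIntegral_congr_fun measurableSet_Iio (g := fun _ => (0:ℝ)) ?_, integral_zero]
    intro x hx
    have huniv : {ω | x < X ω} = Set.univ := by
      ext ω
      simp only [mem_setOf_eq, mem_univ, iff_true]
      exact lt_of_lt_of_le hx (hXnonneg ω)
    simp [huniv, hc_univ]
  have hstep : ∀ k : ℕ,
      (fun x => c {ω | x < X ω}) =ᵐ[volume.restrict (Set.Ioc (k:ℝ) (k+1))]
        (fun _ => c {ω | (k:ℝ) < X ω}) := by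
    intro k
    have h1 : ∀ᵐ x ∂(volume.restrict (Set.Ioc (k:ℝ) (k+1))), x ∈ Set.Ioc (k:ℝ) (k+1) :=
      ae_restrict_mem measurableSet_Ioc
    have h2 : ∀ᵐ x ∂(volume.restrict (Set.Ioc (k:ℝ) (k+1))), x ∉ ({(k:ℝ)+1} : Set ℝ) :=
      ae_restrict_of_ae (measure_eq_zero_iff_ae_notMem.mp Real.volume_singleton)
    filter_upwards [h1, h2] with x hx hne
    have hxlt : x < (k:ℝ) + 1 := lt_of_le_of_ne hx.2 (by simpa using hne)
    have hset : {ω | x < X ω} = {ω | (k:ℝ) < X ω} := by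
      ext ω
      simp only [mem_setOf_eq]
      constructor
      · intro h; exact lt_trans hx.1 h
      · intro h
        have h1 : (k:ℝ) < (f ω : ℝ) := by rw [← hfX ω]; exact h
        have h2 : k < f ω := by exact_mod_cast h1
        have h3 : (k:ℝ) + 1 ≤ (f ω : ℝ) := by exact_mod_cast h2
        rw [hfX ω]
        exact lt_of_lt_of_le hxlt h3
    rw [hset]
  have hIoc : ∀ k : ℕ, IntegrableOn (fun x => c {ω | x < X ω}) (Set.Ioc (k:ℝ) (k+1)) ∧
      ∫ x in Set.Ioc (k:ℝ) (k+1), c {ω | x < X ω} = c {ω | (k:ℝ) < X ω} := by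
    intro k
    have hvol : volume (Set.Ioc (k:ℝ) (k+1)) = 1 := by
      rw [Real.volume_Ioc]
      norm_num
    constructor
    · have hconst : IntegrableOn (fun _ => c {ω | (k:ℝ) < X ω}) (Set.Ioc (k:ℝ) (k+1)) := by
        exact integrableOn_const (by rw [hvol]; exact ENNReal.one_ne_top)
      exact hconst.congr ((hstep k).symm)
    · rw [integral_congr_ae (hstep k), setIntegral_const, measureReal_def, hvol]
      simp
  have hIocN : ∀ N : ℕ, IntegrableOn (fun x => c {ω | x < X ω}) (Set.Ioc (0:ℝ) (N:ℕ)) ∧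
      ∫ x in Set.Ioc (0:ℝ) ((N:ℕ):ℝ), c {ω | x < X ω}
        = ∑ k ∈ Finset.range N, c {ω | (k : ℝ) < X ω} := by
    intro N
    induction N with
    | zero => simp
    | succ n ih =>
      have hunion : Set.Ioc (0:ℝ) ((n+1:ℕ):ℝ) = Set.Ioc (0:ℝ) (n:ℕ) ∪ Set.Ioc (n:ℝ) ((n:ℝ)+1) := by
        rw [Ioc_union_Ioc_eq_Ioc (by positivity) (by linarith)]
        push_cast
        ring_nf
      constructor
      · rw [hunion]
        exact ih.1.union (hIoc n).1
      · rw [hunion, setIntegral_union (Set.Ioc_disjoint_Ioc_of_le le_rfl) measurableSet_Ioc ih.1 (hIoc n).1,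
          ih.2, (hIoc n).2, Finset.sum_range_succ]
  have htail_eq : Set.EqOn (fun x => c {ω | x < X ω}) (fun _ => (0:ℝ)) (Set.Ioi (M:ℝ)) := by
    intro x hx
    have hempty : {ω | x < X ω} = (∅ : Set Ω) := by
      ext ω
      simp only [mem_setOf_eq, mem_empty_iff_false, iff_false, not_lt]
      have h1 : X ω ≤ (M:ℝ) := by
        rw [hfX ω]; exact_mod_cast hfM ω
      exact le_trans h1 (le_of_lt hx)
    simp [hempty, hc_empty]
  have htail_int : IntegrableOn (fun x => c {ω | x < X ω}) (Set.Ioi (M:ℝ)) := by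
    exact (integrableOn_zero (ε' := ℝ)).congr_fun htail_eq.symm measurableSet_Ioi
  have htail : ∫ x in Set.Ioi (M:ℝ), c {ω | x < X ω} = 0 := by
    rw [setIntegral_congr_fun measurableSet_Ioi htail_eq, integral_zero]
  have hpos : ∫ x in Set.Ioi (0:ℝ), c {ω | x < X ω}
      = ∑ k ∈ Finset.range M, c {ω | (k : ℝ) < X ω} := by
    rw [← Ioc_union_Ioi_eq_Ioi (by positivity : (0:ℝ) ≤ (M:ℝ)),
      setIntegral_union Set.Ioc_disjoint_Ioi_same measurableSet_Ioi (hIocN M).1 htail_int,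
      (hIocN M).2, htail, add_zero]
  rw [choquet, hneg, hpos, zero_add]

/-- Key telescoping lemma: adding an indicator of `B` increases the Choquet sum by
at most `c B`. -/
lemma key_indicator (c : Set Ω → ℝ) (hc_empty : c ∅ = 0)
    (hc_submod : ∀ A B : Set Ω, MeasurableSet A → MeasurableSet B →
        c (A ∪ B) + c (A ∩ B) ≤ c A + c B)
    (h : Ω → ℕ) (hh : Measurable h) (B : Set Ω) (hB : MeasurableSet B)
    (K : ℕ) (hK : ∀ ω, h ω ≤ K) :
    ∑ k ∈ Finset.range (K+1), c ({ω | k < h ω} ∪ ({ω | k ≤ h ω} ∩ B)) ≤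
      ∑ k ∈ Finset.range K, c {ω | k < h ω} + c B := by
  have hmeas_lt : ∀ k : ℕ, MeasurableSet {ω | k < h ω} := fun k =>
    hh (MeasurableSet.of_discrete (s := {n : ℕ | k < n}))
  have hmeas_le : ∀ k : ℕ, MeasurableSet {ω | k ≤ h ω} := fun k =>
    hh (MeasurableSet.of_discrete (s := {n : ℕ | k ≤ n}))
  have hterm : ∀ k : ℕ, c ({ω | k < h ω} ∪ ({ω | k ≤ h ω} ∩ B)) ≤
      c {ω | k < h ω} + c ({ω | k ≤ h ω} ∩ B) - c ({ω | k < h ω} ∩ B) := by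
    intro k
    have hsub := hc_submod {ω | k < h ω} ({ω | k ≤ h ω} ∩ B) (hmeas_lt k)
      ((hmeas_le k).inter hB)
    have hinter : {ω | k < h ω} ∩ ({ω | k ≤ h ω} ∩ B) = {ω | k < h ω} ∩ B := by
      ext ω
      simp only [mem_inter_iff, mem_setOf_eq]
      constructor
      · rintro ⟨h1, _, h3⟩; exact ⟨h1, h3⟩
      · rintro ⟨h1, h2⟩; exact ⟨h1, le_of_lt h1, h2⟩
    rw [hinter] at hsub
    linarith
  calc ∑ k ∈ Finset.range (K+1), c ({ω | k < h ω} ∪ ({ω | k ≤ h ω} ∩ B))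
      ≤ ∑ k ∈ Finset.range (K+1),
          (c {ω | k < h ω} + c ({ω | k ≤ h ω} ∩ B) - c ({ω | k < h ω} ∩ B)) :=
        Finset.sum_le_sum (fun k _ => hterm k)
    _ = (∑ k ∈ Finset.range (K+1), c {ω | k < h ω})
        + (∑ k ∈ Finset.range (K+1), c ({ω | k ≤ h ω} ∩ B))
        - (∑ k ∈ Finset.range (K+1), c ({ω | k < h ω} ∩ B)) := by
        rw [Finset.sum_sub_distrib, Finset.sum_add_distrib]
    _ = ∑ k ∈ Finset.range K, c {ω | k < h ω} + c B := by
        have e1 : ∑ k ∈ Finset.range (K+1), c {ω | k < h ω}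
            = ∑ k ∈ Finset.range K, c {ω | k < h ω} := by
          rw [Finset.sum_range_succ]
          have : {ω | K < h ω} = (∅ : Set Ω) := by
            ext ω
            simp only [mem_setOf_eq, mem_empty_iff_false, iff_false, not_lt]
            exact hK ω
          rw [this, hc_empty, add_zero]
        have e2 : ∑ k ∈ Finset.range (K+1), c ({ω | k ≤ h ω} ∩ B)
            = (∑ k ∈ Finset.range K, c ({ω | k < h ω} ∩ B)) + c B := by
          have hB0 : ({ω | 0 ≤ h ω} : Set Ω) ∩ B = B := by ext ω; simp
          have hsucc : ∀ k : ℕ, ({ω | k + 1 ≤ h ω} : Set Ω) ∩ B = {ω | k < h ω} ∩ B := by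
            intro k; ext ω
            simp only [mem_inter_iff, mem_setOf_eq]
            exact and_congr_left' (by omega)
          rw [Finset.sum_range_succ']
          simp only [hsucc, hB0]
        have e3 : ∑ k ∈ Finset.range (K+1), c ({ω | k < h ω} ∩ B)
            = ∑ k ∈ Finset.range K, c ({ω | k < h ω} ∩ B) := by
          rw [Finset.sum_range_succ]
          have : {ω | K < h ω} ∩ B = (∅ : Set Ω) := by
            ext ω
            simp only [mem_inter_iff, mem_setOf_eq, mem_empty_iff_false, iff_false, not_and, not_lt]
            intro h1
            exact absurd h1 (not_lt.2 (hK ω))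
          rw [this, hc_empty, add_zero]
        rw [e1, e2, e3]
        ring

/-- The combinatorial core: subadditivity at the level of capacity sums. -/
lemma comb_subadd (c : Set Ω → ℝ) (hc_empty : c ∅ = 0)
    (hc_submod : ∀ A B : Set Ω, MeasurableSet A → MeasurableSet B →
        c (A ∪ B) + c (A ∩ B) ≤ c A + c B)
    (f : Ω → ℕ) (hf : Measurable f) (M : ℕ) (hfM : ∀ ω, f ω ≤ M) :
    ∀ N : ℕ, ∀ g : Ω → ℕ, Measurable g → (∀ ω, g ω ≤ N) →
      ∑ k ∈ Finset.range (M+N), c {ω | k < f ω + g ω} ≤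
        ∑ k ∈ Finset.range M, c {ω | k < f ω} + ∑ k ∈ Finset.range N, c {ω | k < g ω} := by
  intro N
  induction N with
  | zero =>
    intro g hg hgN
    have hg0 : ∀ ω, g ω = 0 := fun ω => Nat.le_zero.mp (hgN ω)
    have hsets : ∀ k : ℕ, {ω | k < f ω + g ω} = {ω | k < f ω} := by
      intro k; ext ω; simp [hg0 ω]
    simp only [Nat.add_zero, Finset.range_zero, Finset.sum_empty, add_zero]
    exact le_of_eq (Finset.sum_congr rfl (fun k _ => by rw [hsets k]))
  | succ n ih =>
    intro g hg hgN
    set g' : Ω → ℕ := fun ω => g ω - 1 with hg'def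
    have hg' : Measurable g' := (measurable_from_top (f := fun m : ℕ => m - 1)).comp hg
    have hg'N : ∀ ω, g' ω ≤ n := fun ω => by
      have := hgN ω; simp only [hg'def]; omega
    set h : Ω → ℕ := fun ω => f ω + g' ω with hhdef
    have hh : Measurable h := hf.add hg'
    have hhK : ∀ ω, h ω ≤ M + n := fun ω => Nat.add_le_add (hfM ω) (hg'N ω)
    set B : Set Ω := {ω | 0 < g ω} with hBdef
    have hB : MeasurableSet B := hg (MeasurableSet.of_discrete (s := {m : ℕ | 0 < m}))
    have hsets : ∀ k : ℕ, {ω | k < f ω + g ω}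
        = {ω | k < h ω} ∪ ({ω | k ≤ h ω} ∩ B) := by
      intro k
      ext ω
      simp only [mem_union, mem_inter_iff, mem_setOf_eq, hhdef, hg'def, hBdef]
      omega
    have step1 : ∑ k ∈ Finset.range (M+(n+1)), c {ω | k < f ω + g ω}
        ≤ ∑ k ∈ Finset.range (M+n), c {ω | k < h ω} + c B := by
      have := key_indicator c hc_empty hc_submod h hh B hB (M+n) hhK
      calc ∑ k ∈ Finset.range (M+(n+1)), c {ω | k < f ω + g ω}
          = ∑ k ∈ Finset.range ((M+n)+1), c ({ω | k < h ω} ∪ ({ω | k ≤ h ω} ∩ B)) := by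
            rw [show M+(n+1) = (M+n)+1 by ring]
            exact Finset.sum_congr rfl (fun k _ => by rw [hsets k])
        _ ≤ ∑ k ∈ Finset.range (M+n), c {ω | k < h ω} + c B := this
    have step2 : ∑ k ∈ Finset.range (M+n), c {ω | k < h ω}
        ≤ ∑ k ∈ Finset.range M, c {ω | k < f ω} + ∑ k ∈ Finset.range n, c {ω | k < g' ω} :=
      ih g' hg' hg'N
    have step3 : ∑ k ∈ Finset.range n, c {ω | k < g' ω} + c B
        = ∑ k ∈ Finset.range (n+1), c {ω | k < g ω} := by
      rw [Finset.sum_range_succ']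
      congr 1
      apply Finset.sum_congr rfl
      intro k _
      congr 1
      ext ω
      simp only [mem_setOf_eq, hg'def]
      omega
    linarith

end Aux

/-- For `c` submodular and `X, Y` measurable with values in `{0, 1, …, 2^p}`, the
Choquet integral is subadditive. -/
theorem choquet_subadditive_of_range_pow_two {Ω : Type*} [MeasurableSpace Ω]
    (c : Set Ω → ℝ)
    (hc_mono : ∀ ⦃A B : Set Ω⦄, MeasurableSet A → MeasurableSet B → A ⊆ B → c A ≤ c B)
    (hc_range : ∀ A : Set Ω, MeasurableSet A → c A ∈ Set.Icc (0 : ℝ) 1)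
    (hc_empty : c ∅ = 0) (hc_univ : c Set.univ = 1)
    (hc_submod : ∀ A B : Set Ω, MeasurableSet A → MeasurableSet B →
        c (A ∪ B) + c (A ∩ B) ≤ c A + c B)
    (p : ℕ) (X Y : Ω → ℝ) (hX : Measurable X) (hY : Measurable Y)
    (hXr : ∀ ω, ∃ n : ℕ, n ≤ 2 ^ p ∧ X ω = n)
    (hYr : ∀ ω, ∃ n : ℕ, n ≤ 2 ^ p ∧ Y ω = n) :
    choquet c (fun ω => X ω + Y ω) ≤ choquet c X + choquet c Y := by
  set M : ℕ := 2 ^ p with hMdef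
  set fX : Ω → ℕ := fun ω => ⌊X ω⌋₊ with hfXdef
  set fY : Ω → ℕ := fun ω => ⌊Y ω⌋₊ with hfYdef
  have hXf : ∀ ω, X ω = (fX ω : ℝ) := by
    intro ω
    obtain ⟨n, _, he⟩ := hXr ω
    rw [hfXdef]; simp only [he, Nat.floor_natCast]
  have hYf : ∀ ω, Y ω = (fY ω : ℝ) := by
    intro ω
    obtain ⟨n, _, he⟩ := hYr ω
    rw [hfYdef]; simp only [he, Nat.floor_natCast]
  have hfXM : ∀ ω, fX ω ≤ M := by
    intro ω
    obtain ⟨n, hn, he⟩ := hXr ω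
    rw [hfXdef]; simp only [he, Nat.floor_natCast]; exact hn
  have hfYM : ∀ ω, fY ω ≤ M := by
    intro ω
    obtain ⟨n, hn, he⟩ := hYr ω
    rw [hfYdef]; simp only [he, Nat.floor_natCast]; exact hn
  have hfXmeas : Measurable fX := by
    apply measurable_to_countable'
    intro n
    have : fX ⁻¹' {n} = X ⁻¹' {(n:ℝ)} := by
      ext ω
      simp only [mem_preimage, mem_singleton_iff]
      rw [hXf ω]
      exact_mod_cast Iff.rfl
    rw [this]
    exact hX (measurableSet_singleton _)
  have hfYmeas : Measurable fY := by
    apply measurable_to_countable'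
    intro n
    have : fY ⁻¹' {n} = Y ⁻¹' {(n:ℝ)} := by
      ext ω
      simp only [mem_preimage, mem_singleton_iff]
      rw [hYf ω]
      exact_mod_cast Iff.rfl
    rw [this]
    exact hY (measurableSet_singleton _)
  -- Choquet integrals as finite sums
  have hXsum := choquet_eq_sum_aux c hc_empty hc_univ X fX M hXf hfXM
  have hYsum := choquet_eq_sum_aux c hc_empty hc_univ Y fY M hYf hfYM
  have hSsum := choquet_eq_sum_aux c hc_empty hc_univ (fun ω => X ω + Y ω)
    (fun ω => fX ω + fY ω) (M + M)
    (fun ω => by push_cast [hXf ω, hYf ω]; ring)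
    (fun ω => Nat.add_le_add (hfXM ω) (hfYM ω))
  -- Convert real level sets to natural ones
  have hXsets : ∀ k : ℕ, {ω | (k:ℝ) < X ω} = {ω | k < fX ω} := by
    intro k; ext ω
    simp only [mem_setOf_eq]
    rw [hXf ω]; exact_mod_cast Iff.rfl
  have hYsets : ∀ k : ℕ, {ω | (k:ℝ) < Y ω} = {ω | k < fY ω} := by
    intro k; ext ω
    simp only [mem_setOf_eq]
    rw [hYf ω]; exact_mod_cast Iff.rfl
  have hSsets : ∀ k : ℕ, {ω | (k:ℝ) < X ω + Y ω} = {ω | k < fX ω + fY ω} := by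
    intro k; ext ω
    simp only [mem_setOf_eq]
    rw [hXf ω, hYf ω]
    exact_mod_cast Iff.rfl
  have hXsum' : choquet c X = ∑ k ∈ Finset.range M, c {ω | k < fX ω} := by
    rw [hXsum]; exact Finset.sum_congr rfl (fun k _ => by rw [hXsets k])
  have hYsum' : choquet c Y = ∑ k ∈ Finset.range M, c {ω | k < fY ω} := by
    rw [hYsum]; exact Finset.sum_congr rfl (fun k _ => by rw [hYsets k])
  have hSsum' : choquet c (fun ω => X ω + Y ω)
      = ∑ k ∈ Finset.range (M + M), c {ω | k < fX ω + fY ω} := by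
    rw [hSsum]
    exact Finset.sum_congr rfl (fun k _ => by
      rw [show {ω | (k:ℝ) < (fun ω => X ω + Y ω) ω} = {ω | (k:ℝ) < X ω + Y ω} from rfl, hSsets k])
  rw [hXsum', hYsum', hSsum']
  exact comb_subadd c hc_empty hc_submod fX hfXmeas M hfXM M fY hfYmeas hfYM
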